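/- If in the Frank–Wolfe algorithm the initialization is x(t_0) = x₀ ∈ argmin_{x ∈ P} ‖x‖_∞ (dropping the assumptions 0 ∈ P and F(0) = 0), then there is an absolute constant C > 0 such that for all T ≥ 2 the best iterate satisfies max_{0 ≤ j ≤ T} F(x(t_j)) − (1/4)F(x₀) ≥ (1/4)(1 − min_{x ∈ P} ‖x‖_∞) F(x*) − C·nL/(ln T)². -/

import Mathlib

/-- The harmonic number `H j = ∑_{k=1}^j 1/k` (with `H 0 = 0`). -/
noncomputable def harmonicNum (j : ℕ) : ℝ := ∑ k ∈ Finset.range j, (1 : ℝ) / (k + 1)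

/-- `H_{2,j} = ∑_{k=1}^j 1/k²`. -/
noncomputable def harmonicNum2 (j : ℕ) : ℝ := ∑ k ∈ Finset.range j, (1 : ℝ) / ((k : ℝ) + 1) ^ 2

/-- The time values `t_j = 1/(1 - ln(1 + H_j/H_T)) - 1` of the Frank–Wolfe algorithm. -/
noncomputable def fwTime (T j : ℕ) : ℝ :=
  1 / (1 - Real.log (1 + harmonicNum j / harmonicNum T)) - 1

/-- The Frank–Wolfe step ratio `e^{-1/(1+t_j) + 1/(1+t_{j+1})}`. -/
noncomputable def fwRatio (T j : ℕ) : ℝ :=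
  Real.exp (-(1 / (1 + fwTime T j)) + 1 / (1 + fwTime T (j + 1)))

/-- `√a_{t_j} = e^{t_j/(1+t_j)}`. -/
noncomputable def fwSqa (T j : ℕ) : ℝ := Real.exp (fwTime T j / (1 + fwTime T j))

/-- `F : [0,1]^n → ℝ` is DR-submodular: for all `x ≤ y` in `[0,1]^n`, coordinates `i` and
`a > 0` with `x + a·e_i, y + a·e_i ∈ [0,1]^n`, one has
`F(x + a·e_i) - F(x) ≥ F(y + a·e_i) - F(y)`. -/
def DRSubmodular {n : ℕ} (F : (Fin n → ℝ) → ℝ) : Prop :=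
  ∀ x y : Fin n → ℝ, x ∈ Set.Icc (0 : Fin n → ℝ) 1 → y ∈ Set.Icc (0 : Fin n → ℝ) 1 →
    x ≤ y → ∀ i : Fin n, ∀ a : ℝ, 0 < a →
      x + a • (Pi.single i 1 : Fin n → ℝ) ∈ Set.Icc (0 : Fin n → ℝ) 1 →
      y + a • (Pi.single i 1 : Fin n → ℝ) ∈ Set.Icc (0 : Fin n → ℝ) 1 →
      F (y + a • (Pi.single i 1 : Fin n → ℝ)) - F y ≤
        F (x + a • (Pi.single i 1 : Fin n → ℝ)) - F x

/-- The continuous linear map `y ↦ ⟨g, y⟩ = ∑ i, g i * y i` on `ℝⁿ`. -/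
noncomputable def gradCLM {n : ℕ} (g : Fin n → ℝ) : (Fin n → ℝ) →L[ℝ] ℝ :=
  ∑ i, g i • (ContinuousLinearMap.proj i : (Fin n → ℝ) →L[ℝ] ℝ)

/-- `gradF` is the gradient of `F` on the box `[0,1]^n`: at each point of the box, `F` is
differentiable within the box with derivative `y ↦ ⟨gradF z, y⟩`. -/
def HasGradientOnBox {n : ℕ} (F : (Fin n → ℝ) → ℝ) (gradF : (Fin n → ℝ) → Fin n → ℝ) : Prop :=
  ∀ z ∈ Set.Icc (0 : Fin n → ℝ) 1, HasFDerivWithinAt F (gradCLM (gradF z)) (Set.Icc 0 1) z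

lemma harmonicNum_nonneg (j : ℕ) : 0 ≤ harmonicNum j := by
  apply Finset.sum_nonneg; intro k _; positivity

lemma harmonicNum_succ (j : ℕ) : harmonicNum (j+1) = harmonicNum j + 1/(j+1) := by
  simp [harmonicNum, Finset.sum_range_succ]

lemma harmonicNum_mono : Monotone harmonicNum := by
  intro a b hab
  apply Finset.sum_le_sum_of_subset_of_nonneg (Finset.range_subset_range.2 hab)
  intro k _ _; positivity

lemma harmonicNum_pos {T : ℕ} (hT : 1 ≤ T) : 0 < harmonicNum T := by
  have : (0:ℝ) < harmonicNum 1 := by norm_num [harmonicNum]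
  exact lt_of_lt_of_le this (harmonicNum_mono hT)

lemma harmonicNum2_succ (j : ℕ) : harmonicNum2 (j+1) = harmonicNum2 j + 1/((j:ℝ)+1)^2 := by
  simp [harmonicNum2, Finset.sum_range_succ]

lemma harmonicNum2_le_two (j : ℕ) : harmonicNum2 j ≤ 2 := by
  have h : harmonicNum2 j ≤ 2 - 2/(j+1) := by
    induction j with
    | zero => norm_num [harmonicNum2]
    | succ j ih =>
      rw [harmonicNum2_succ]
      have hj : (0:ℝ) < (j:ℝ)+1 := by positivity
      have hj2 : (0:ℝ) < (j:ℝ)+2 := by positivity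
      have key : 1/((j:ℝ)+1)^2 ≤ 2/((j:ℝ)+1) - 2/((j:ℝ)+2) := by
        rw [div_sub_div _ _ (ne_of_gt hj) (ne_of_gt hj2), div_le_div_iff₀ (by positivity) (by positivity)]
        nlinarith [sq_nonneg ((j:ℝ)+1)]
      have hcast : ((j:ℕ)+1 : ℕ) = ((j:ℝ)+1 : ℝ) ∨ True := Or.inr trivial
      have : ((j+1 : ℕ):ℝ) + 1 = (j:ℝ) + 2 := by push_cast; ring
      rw [this]
      linarith
  have : (0:ℝ) ≤ 2/((j:ℝ)+1) := by positivity
  linarith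

lemma log_le_harmonicNum (T : ℕ) : Real.log (T+1) ≤ harmonicNum T := by
  induction T with
  | zero => simp [harmonicNum]
  | succ T ih =>
    have h1 : (0:ℝ) < (T:ℝ)+1 := by positivity
    have h2 : (0:ℝ) < (T:ℝ)+2 := by positivity
    have hlog : Real.log ((T:ℝ)+2) - Real.log ((T:ℝ)+1) ≤ 1/((T:ℝ)+1) := by
      rw [← Real.log_div (ne_of_gt h2) (ne_of_gt h1)]
      have := Real.log_le_sub_one_of_pos (show (0:ℝ) < ((T:ℝ)+2)/((T:ℝ)+1) by positivity)
      have heq : ((T:ℝ)+2)/((T:ℝ)+1) - 1 = 1/((T:ℝ)+1) := by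
        field_simp; norm_num
      linarith
    rw [harmonicNum_succ]
    have hc : ((T+1 : ℕ):ℝ) + 1 = (T:ℝ) + 2 := by push_cast; ring
    rw [hc]
    push_cast
    linarith


section
variable {T : ℕ}

lemma log_lt_one_aux (hT : 0 < harmonicNum T) {j : ℕ}
    (hj : harmonicNum j ≤ harmonicNum T) :
    Real.log (1 + harmonicNum j / harmonicNum T) < 1 := by
  have h2 : 1 + harmonicNum j / harmonicNum T ≤ 2 := by
    have := (div_le_one hT).2 hj
    linarith
  have hd : 0 ≤ harmonicNum j / harmonicNum T :=
    div_nonneg (harmonicNum_nonneg j) hT.le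
  calc Real.log (1 + harmonicNum j / harmonicNum T) ≤ Real.log 2 := by
        apply Real.log_le_log (by linarith) h2
    _ < 1 := by
        have h2e : (2:ℝ) < Real.exp 1 := by
          have := Real.exp_one_gt_d9; linarith
        calc Real.log 2 < Real.log (Real.exp 1) := by
              apply Real.log_lt_log (by norm_num) h2e
          _ = 1 := Real.log_exp 1

lemma one_div_one_add_fwTime (hT : 0 < harmonicNum T) {j : ℕ}
    (hj : harmonicNum j ≤ harmonicNum T) :
    1 / (1 + fwTime T j) = 1 - Real.log (1 + harmonicNum j / harmonicNum T) := by
  have hlt := log_lt_one_aux hT hj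
  have hne : 1 - Real.log (1 + harmonicNum j / harmonicNum T) ≠ 0 := by linarith
  unfold fwTime
  rw [show (1:ℝ) + (1 / (1 - Real.log (1 + harmonicNum j / harmonicNum T)) - 1) = 1 / (1 - Real.log (1 + harmonicNum j / harmonicNum T)) by ring, one_div_one_div]

lemma fwRatio_eq (hT : 0 < harmonicNum T) {j : ℕ}
    (hj : harmonicNum j ≤ harmonicNum T) (hj1 : harmonicNum (j+1) ≤ harmonicNum T) :
    fwRatio T j = (harmonicNum T + harmonicNum j) / (harmonicNum T + harmonicNum (j+1)) := by
  have hd : 0 ≤ harmonicNum j / harmonicNum T :=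
    div_nonneg (harmonicNum_nonneg j) hT.le
  have hd1 : 0 ≤ harmonicNum (j+1) / harmonicNum T :=
    div_nonneg (harmonicNum_nonneg (j+1)) hT.le
  have h0 : (0:ℝ) < 1 + harmonicNum j / harmonicNum T := by linarith
  have h1 : (0:ℝ) < 1 + harmonicNum (j+1) / harmonicNum T := by linarith
  unfold fwRatio
  rw [one_div_one_add_fwTime hT hj, one_div_one_add_fwTime hT hj1]
  have : -(1 - Real.log (1 + harmonicNum j / harmonicNum T)) +
      (1 - Real.log (1 + harmonicNum (j+1) / harmonicNum T)) =
      Real.log (1 + harmonicNum j / harmonicNum T) -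
      Real.log (1 + harmonicNum (j+1) / harmonicNum T) := by ring
  rw [this, Real.exp_sub, Real.exp_log h0, Real.exp_log h1]
  rw [div_eq_div_iff (by linarith) (by have := harmonicNum_nonneg (j+1); linarith)]
  field_simp

end


section DR
variable {n : ℕ} {F : (Fin n → ℝ) → ℝ} {gradF : (Fin n → ℝ) → Fin n → ℝ} {L : ℝ}

-- membership helper
lemma mem_box_iff {z : Fin n → ℝ} :
    z ∈ Set.Icc (0 : Fin n → ℝ) 1 ↔ ∀ j, 0 ≤ z j ∧ z j ≤ 1 := by
  simp [Set.mem_Icc, Pi.le_def, forall_and]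

lemma add_single_apply (z : Fin n → ℝ) (c : ℝ) (i j : Fin n) :
    (z + c • (Pi.single i 1 : Fin n → ℝ)) j = z j + (if j = i then c else 0) := by
  by_cases h : j = i <;> simp [h, Pi.single_apply]

lemma mem_box_add_single {z : Fin n → ℝ} (hz : z ∈ Set.Icc (0 : Fin n → ℝ) 1)
    {i : Fin n} {c : ℝ} (hc : 0 ≤ c) (hc1 : z i + c ≤ 1) :
    z + c • (Pi.single i 1 : Fin n → ℝ) ∈ Set.Icc (0 : Fin n → ℝ) 1 := by
  rw [mem_box_iff] at hz ⊢
  intro j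
  rw [add_single_apply]
  rcases hz j with ⟨h0, h1⟩
  split_ifs with h
  · subst h; exact ⟨by linarith, hc1⟩
  · constructor <;> linarith

lemma sum_grad_single (g : Fin n → ℝ) (z : Fin n → ℝ) (c : ℝ) (i : Fin n) :
    ∑ j, g j * ((z + c • (Pi.single i 1 : Fin n → ℝ)) j - z j) = g i * c := by
  have : ∀ j, g j * ((z + c • (Pi.single i 1 : Fin n → ℝ)) j - z j)
      = if j = i then g i * c else 0 := by
    intro j
    rw [add_single_apply]
    by_cases h : j = i <;> simp [h]
  rw [Finset.sum_congr rfl (fun j _ => this j)]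
  simp

lemma sum_sq_single (z : Fin n → ℝ) (c : ℝ) (i : Fin n) :
    ∑ j, ((z + c • (Pi.single i 1 : Fin n → ℝ)) j - z j) ^ 2 = c ^ 2 := by
  have : ∀ j, ((z + c • (Pi.single i 1 : Fin n → ℝ)) j - z j) ^ 2
      = if j = i then c ^ 2 else 0 := by
    intro j
    rw [add_single_apply]
    by_cases h : j = i <;> simp [h]
  rw [Finset.sum_congr rfl (fun j _ => this j)]
  simp


/-- Inner stepping lemma, up version. -/
lemma inner_up (hDR : DRSubmodular F)
    (hsm : ∀ z ∈ Set.Icc (0 : Fin n → ℝ) 1, ∀ w ∈ Set.Icc (0 : Fin n → ℝ) 1,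
      |F w - F z - ∑ i, gradF z i * (w i - z i)| ≤ L / 2 * ∑ i, (w i - z i) ^ 2)
    {x z : Fin n → ℝ} (hx : x ∈ Set.Icc (0 : Fin n → ℝ) 1)
    (hz : z ∈ Set.Icc (0 : Fin n → ℝ) 1) (hxz : x ≤ z) {i : Fin n} (hzi : z i = x i)
    {d : ℝ} (hd0 : 0 ≤ d) (hd1 : x i + d ≤ 1) {m : ℕ} (hm : 1 ≤ m) :
    F (z + d • (Pi.single i 1 : Fin n → ℝ)) - F z ≤ gradF x i * d + L / 2 * d ^ 2 / m := by
  rcases eq_or_lt_of_le hd0 with h|hdpos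
  · rw [← h]
    simp
  have hm0 : (0:ℝ) < (m:ℝ) := by exact_mod_cast hm
  set a := d / m with ha_def
  have ha : 0 < a := div_pos hdpos hm0
  have hma : (m:ℝ) * a = d := by rw [ha_def]; field_simp
  have had : ∀ k : ℕ, k ≤ m → (k:ℝ) * a ≤ d := by
    intro k hk
    have hkm : (k:ℝ) ≤ (m:ℝ) := by exact_mod_cast hk
    nlinarith [ha.le]
  have hxi0 : 0 ≤ x i := by rw [mem_box_iff] at hx; exact (hx i).1
  -- membership of z + (k*a) • single for k*a + (extra 0 ≤) ... general helper
  have hmemz : ∀ k : ℕ, k ≤ m → z + ((k:ℝ) * a) • (Pi.single i 1 : Fin n → ℝ) ∈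
      Set.Icc (0 : Fin n → ℝ) 1 := by
    intro k hk
    apply mem_box_add_single hz (by positivity)
    rw [hzi]
    linarith [had k hk]
  have hmemx : x + a • (Pi.single i 1 : Fin n → ℝ) ∈ Set.Icc (0 : Fin n → ℝ) 1 := by
    apply mem_box_add_single hx ha.le
    have := had 1 hm
    simp at this
    linarith
  -- the single-step bound at x
  have hstep_x : F (x + a • (Pi.single i 1 : Fin n → ℝ)) - F x ≤ gradF x i * a + L/2 * a^2 := by
    have := hsm x hx _ hmemx
    rw [sum_grad_single, sum_sq_single] at this
    have := abs_le.1 this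
    linarith [this.2]
  -- each substep
  have key : ∀ k : ℕ, k < m →
      F (z + (((k:ℝ)+1) * a) • (Pi.single i 1 : Fin n → ℝ))
        - F (z + ((k:ℝ) * a) • (Pi.single i 1 : Fin n → ℝ)) ≤ gradF x i * a + L/2 * a^2 := by
    intro k hk
    have hle : x ≤ z + ((k:ℝ) * a) • (Pi.single i 1 : Fin n → ℝ) := by
      intro j
      rw [add_single_apply]
      have := hxz j
      have : (0:ℝ) ≤ (k:ℝ)*a := by positivity
      split_ifs <;> [skip; skip] <;> linarith [hxz j]
    have hmem2 : (z + ((k:ℝ) * a) • (Pi.single i 1 : Fin n → ℝ)) + a • (Pi.single i 1 : Fin n → ℝ)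
        ∈ Set.Icc (0 : Fin n → ℝ) 1 := by
      have heq : (z + ((k:ℝ) * a) • (Pi.single i 1 : Fin n → ℝ)) + a • (Pi.single i 1 : Fin n → ℝ)
          = z + (((k:ℝ)+1) * a) • (Pi.single i 1 : Fin n → ℝ) := by
        rw [add_assoc, ← add_smul]; ring_nf
      rw [heq]
      have := hmemz (k+1) hk
      push_cast at this
      exact this
    have hdr := hDR x (z + ((k:ℝ) * a) • (Pi.single i 1 : Fin n → ℝ)) hx (hmemz k hk.le)
      hle i a ha hmemx hmem2
    have heq : (z + ((k:ℝ) * a) • (Pi.single i 1 : Fin n → ℝ)) + a • (Pi.single i 1 : Fin n → ℝ)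
        = z + (((k:ℝ)+1) * a) • (Pi.single i 1 : Fin n → ℝ) := by
      rw [add_assoc, ← add_smul]; ring_nf
    rw [heq] at hdr
    linarith [hstep_x]
  -- telescope
  have hsum := Finset.sum_range_sub
    (fun k => F (z + ((k:ℝ) * a) • (Pi.single i 1 : Fin n → ℝ))) m
  push_cast at hsum
  simp only [zero_mul, zero_smul, add_zero] at hsum
  have tel : F (z + ((m:ℝ) * a) • (Pi.single i 1 : Fin n → ℝ)) - F z
      ≤ m * (gradF x i * a + L/2 * a^2) := by
    calc F (z + ((m:ℝ) * a) • (Pi.single i 1 : Fin n → ℝ)) - F z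
        = ∑ k ∈ Finset.range m,
            (F (z + (((k:ℝ)+1) * a) • (Pi.single i 1 : Fin n → ℝ))
              - F (z + ((k:ℝ) * a) • (Pi.single i 1 : Fin n → ℝ))) := hsum.symm
      _ ≤ ∑ k ∈ Finset.range m, (gradF x i * a + L/2 * a^2) := by
          apply Finset.sum_le_sum
          intro k hk
          exact key k (Finset.mem_range.1 hk)
      _ = m * (gradF x i * a + L/2 * a^2) := by
          rw [Finset.sum_const, Finset.card_range]; ring
  rw [hma] at tel
  calc F (z + d • (Pi.single i 1 : Fin n → ℝ)) - F z ≤ m * (gradF x i * a + L/2 * a^2) := tel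
    _ = gradF x i * d + L / 2 * d ^ 2 / m := by
        rw [ha_def]; field_simp

/-- Inner stepping lemma, down version. -/
lemma inner_down (hDR : DRSubmodular F)
    (hsm : ∀ z ∈ Set.Icc (0 : Fin n → ℝ) 1, ∀ w ∈ Set.Icc (0 : Fin n → ℝ) 1,
      |F w - F z - ∑ i, gradF z i * (w i - z i)| ≤ L / 2 * ∑ i, (w i - z i) ^ 2)
    {z y : Fin n → ℝ} (hz : z ∈ Set.Icc (0 : Fin n → ℝ) 1)
    (hy : y ∈ Set.Icc (0 : Fin n → ℝ) 1) (hzy : z ≤ y) {i : Fin n}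
    {d : ℝ} (hd0 : 0 ≤ d) (hdi : z i + d = y i) {m : ℕ} (hm : 1 ≤ m) :
    gradF y i * d - L / 2 * d ^ 2 / m ≤ F (z + d • (Pi.single i 1 : Fin n → ℝ)) - F z := by
  rcases eq_or_lt_of_le hd0 with h|hdpos
  · rw [← h]; simp
  have hm0 : (0:ℝ) < (m:ℝ) := by exact_mod_cast hm
  set a := d / m with ha_def
  have ha : 0 < a := div_pos hdpos hm0
  have hma : (m:ℝ) * a = d := by rw [ha_def]; field_simp
  have had : ∀ k : ℕ, k ≤ m → (k:ℝ) * a ≤ d := by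
    intro k hk
    have hkm : (k:ℝ) ≤ (m:ℝ) := by exact_mod_cast hk
    nlinarith [ha.le]
  have hzbox := mem_box_iff.1 hz
  have hybox := mem_box_iff.1 hy
  have hmemz : ∀ k : ℕ, k ≤ m → z + ((k:ℝ) * a) • (Pi.single i 1 : Fin n → ℝ) ∈
      Set.Icc (0 : Fin n → ℝ) 1 := by
    intro k hk
    apply mem_box_add_single hz (by positivity)
    have := had k hk
    linarith [(hybox i).2]
  -- the top point w = y + (-a) • single
  set w : Fin n → ℝ := y + (-a) • (Pi.single i 1 : Fin n → ℝ) with hw_def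
  have hwy : w + a • (Pi.single i 1 : Fin n → ℝ) = y := by
    rw [hw_def, add_assoc, ← add_smul]
    norm_num
  have hwmem : w ∈ Set.Icc (0 : Fin n → ℝ) 1 := by
    rw [mem_box_iff]
    intro j
    rw [hw_def, add_single_apply]
    rcases hybox j with ⟨h0, h1⟩
    split_ifs with h
    · subst h
      have h1a : (1:ℝ) * a ≤ d := by have := had 1 hm; push_cast at this; linarith
      constructor
      · have := (hzbox j).1; linarith
      · linarith
    · constructor <;> linarith
  -- single-step bound at y
  have hstep_y : gradF y i * a - L/2 * a^2 ≤ F y - F w := by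
    have hh := hsm y hy w hwmem
    rw [hw_def] at hh
    rw [sum_grad_single, sum_sq_single] at hh
    rw [← hw_def] at hh
    have := abs_le.1 hh
    have h2 := this.2
    have hsq : (-a)^2 = a^2 := by ring
    rw [hsq] at h2
    linarith
  -- each substep
  have key : ∀ k : ℕ, k < m →
      gradF y i * a - L/2 * a^2 ≤
      F (z + (((k:ℝ)+1) * a) • (Pi.single i 1 : Fin n → ℝ))
        - F (z + ((k:ℝ) * a) • (Pi.single i 1 : Fin n → ℝ)) := by
    intro k hk
    have hle : z + ((k:ℝ) * a) • (Pi.single i 1 : Fin n → ℝ) ≤ w := by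
      intro j
      rw [add_single_apply, hw_def, add_single_apply]
      have hk1 : ((k:ℝ)+1) * a ≤ d := by
        have := had (k+1) hk
        push_cast at this
        linarith
      split_ifs with h
      · subst h; nlinarith [hzy j, ha.le]
      · simpa using hzy j
    have hmem2 : (z + ((k:ℝ) * a) • (Pi.single i 1 : Fin n → ℝ)) + a • (Pi.single i 1 : Fin n → ℝ)
        ∈ Set.Icc (0 : Fin n → ℝ) 1 := by
      have heq : (z + ((k:ℝ) * a) • (Pi.single i 1 : Fin n → ℝ)) + a • (Pi.single i 1 : Fin n → ℝ)
          = z + (((k:ℝ)+1) * a) • (Pi.single i 1 : Fin n → ℝ) := by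
        rw [add_assoc, ← add_smul]; ring_nf
      rw [heq]
      have := hmemz (k+1) hk
      push_cast at this
      exact this
    have hmemwa : w + a • (Pi.single i 1 : Fin n → ℝ) ∈ Set.Icc (0 : Fin n → ℝ) 1 := by
      rw [hwy]; exact hy
    have hdr := hDR (z + ((k:ℝ) * a) • (Pi.single i 1 : Fin n → ℝ)) w (hmemz k hk.le) hwmem
      hle i a ha hmem2 hmemwa
    rw [hwy] at hdr
    have heq : (z + ((k:ℝ) * a) • (Pi.single i 1 : Fin n → ℝ)) + a • (Pi.single i 1 : Fin n → ℝ)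
        = z + (((k:ℝ)+1) * a) • (Pi.single i 1 : Fin n → ℝ) := by
      rw [add_assoc, ← add_smul]; ring_nf
    rw [heq] at hdr
    linarith
  -- telescope
  have hsum := Finset.sum_range_sub
    (fun k => F (z + ((k:ℝ) * a) • (Pi.single i 1 : Fin n → ℝ))) m
  push_cast at hsum
  simp only [zero_mul, zero_smul, add_zero] at hsum
  have tel : (m:ℝ) * (gradF y i * a - L/2 * a^2)
      ≤ F (z + ((m:ℝ) * a) • (Pi.single i 1 : Fin n → ℝ)) - F z := by
    calc (m:ℝ) * (gradF y i * a - L/2 * a^2)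
        = ∑ _k ∈ Finset.range m, (gradF y i * a - L/2 * a^2) := by
          rw [Finset.sum_const, Finset.card_range]; ring
      _ ≤ ∑ k ∈ Finset.range m,
            (F (z + (((k:ℝ)+1) * a) • (Pi.single i 1 : Fin n → ℝ))
              - F (z + ((k:ℝ) * a) • (Pi.single i 1 : Fin n → ℝ))) := by
          apply Finset.sum_le_sum
          intro k hk
          exact key k (Finset.mem_range.1 hk)
      _ = F (z + ((m:ℝ) * a) • (Pi.single i 1 : Fin n → ℝ)) - F z := hsum
  rw [hma] at tel
  calc gradF y i * d - L / 2 * d ^ 2 / m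
      = (m:ℝ) * (gradF y i * a - L/2 * a^2) := by rw [ha_def]; field_simp
    _ ≤ _ := tel

/-- The coordinatewise mixing function used in the telescoping argument. -/
def mixFun (x y : Fin n → ℝ) (s : Finset (Fin n)) : Fin n → ℝ :=
  fun j => if j ∈ s then y j else x j

lemma mixFun_mem {x y : Fin n → ℝ} (hx : x ∈ Set.Icc (0 : Fin n → ℝ) 1)
    (hy : y ∈ Set.Icc (0 : Fin n → ℝ) 1) (s : Finset (Fin n)) :
    mixFun x y s ∈ Set.Icc (0 : Fin n → ℝ) 1 := by
  rw [mem_box_iff] at hx hy ⊢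
  intro j
  unfold mixFun
  split_ifs
  · exact hy j
  · exact hx j

lemma mixFun_insert {x y : Fin n → ℝ} {s : Finset (Fin n)} {i : Fin n} (hi : i ∉ s) :
    mixFun x y (insert i s) = mixFun x y s + (y i - x i) • (Pi.single i 1 : Fin n → ℝ) := by
  funext j
  rw [add_single_apply]
  unfold mixFun
  by_cases h : j = i
  · subst h
    rw [if_pos (Finset.mem_insert_self j s), if_neg hi, if_pos rfl]
    ring
  · rw [if_neg h, add_zero]
    by_cases hjs : j ∈ s
    · rw [if_pos hjs, if_pos (Finset.mem_insert_of_mem hjs)]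
    · rw [if_neg hjs, if_neg (by simp [h, hjs])]

/-- Gradient upper bound: for `x ≤ y` in the box, `F y - F x ≤ ⟨∇F(x), y - x⟩`. -/
lemma dr_grad_up (hDR : DRSubmodular F)
    (hsm : ∀ z ∈ Set.Icc (0 : Fin n → ℝ) 1, ∀ w ∈ Set.Icc (0 : Fin n → ℝ) 1,
      |F w - F z - ∑ i, gradF z i * (w i - z i)| ≤ L / 2 * ∑ i, (w i - z i) ^ 2)
    {x y : Fin n → ℝ} (hx : x ∈ Set.Icc (0 : Fin n → ℝ) 1)
    (hy : y ∈ Set.Icc (0 : Fin n → ℝ) 1) (hxy : x ≤ y) :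
    F y - F x ≤ ∑ i, gradF x i * (y i - x i) := by
  have main : ∀ m : ℕ, 1 ≤ m → ∀ s : Finset (Fin n),
      F (mixFun x y s) - F x ≤ (∑ i ∈ s, gradF x i * (y i - x i))
        + L/2 * (∑ i ∈ s, (y i - x i)^2) / m := by
    intro m hm s
    induction s using Finset.induction_on with
    | empty =>
      have : mixFun x y ∅ = x := by funext j; simp [mixFun]
      rw [this]
      simp
    | insert i s hi ih =>
      have hzmem := mixFun_mem hx hy s
      have hxle : x ≤ mixFun x y s := by
        intro j
        unfold mixFun
        split_ifs
        · exact hxy j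
        · exact le_rfl
      have hzi : mixFun x y s i = x i := by unfold mixFun; rw [if_neg hi]
      have hd0 : 0 ≤ y i - x i := sub_nonneg.2 (hxy i)
      have hd1 : x i + (y i - x i) ≤ 1 := by
        have := (mem_box_iff.1 hy i).2
        linarith
      have hstep := inner_up hDR hsm hx hzmem hxle hzi hd0 hd1 hm
      rw [mixFun_insert hi]
      rw [Finset.sum_insert hi, Finset.sum_insert hi]
      have hring : (∑ j ∈ s, gradF x j * (y j - x j)) + L/2 * (∑ j ∈ s, (y j - x j)^2) / m
          + (gradF x i * (y i - x i) + L / 2 * (y i - x i) ^ 2 / m)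
          = gradF x i * (y i - x i) + (∑ j ∈ s, gradF x j * (y j - x j))
            + L/2 * ((y i - x i)^2 + ∑ j ∈ s, (y j - x j)^2) / m := by ring
      linarith [hring]
  apply le_of_forall_pos_le_add
  intro ε hε
  set K := L/2 * (∑ i, (y i - x i)^2) with hK
  obtain ⟨m, hmK⟩ := exists_nat_gt (K / ε)
  have hM1 : 1 ≤ m + 1 := Nat.le_add_left 1 m
  have hMpos : (0:ℝ) < ((m:ℝ) + 1) := by positivity
  have hmain := main (m+1) hM1 Finset.univ
  have huniv : mixFun x y Finset.univ = y := by funext j; simp [mixFun]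
  rw [huniv] at hmain
  have hKM : K / ((m:ℝ)+1) < ε := by
    rw [div_lt_iff₀ hMpos]
    have : K / ε < (m:ℝ) + 1 := lt_of_lt_of_le hmK (by linarith)
    rw [div_lt_iff₀ hε] at this
    linarith [this]
  have hcast : ((m+1 : ℕ):ℝ) = (m:ℝ) + 1 := by push_cast; ring
  rw [hcast] at hmain
  calc F y - F x ≤ (∑ i, gradF x i * (y i - x i)) + K / ((m:ℝ)+1) := by
        rw [hK]; linarith [hmain]
    _ ≤ (∑ i, gradF x i * (y i - x i)) + ε := by linarith

/-- Gradient lower bound: for `x ≤ y` in the box, `⟨∇F(y), y - x⟩ ≤ F y - F x`. -/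
lemma dr_grad_down (hDR : DRSubmodular F)
    (hsm : ∀ z ∈ Set.Icc (0 : Fin n → ℝ) 1, ∀ w ∈ Set.Icc (0 : Fin n → ℝ) 1,
      |F w - F z - ∑ i, gradF z i * (w i - z i)| ≤ L / 2 * ∑ i, (w i - z i) ^ 2)
    {x y : Fin n → ℝ} (hx : x ∈ Set.Icc (0 : Fin n → ℝ) 1)
    (hy : y ∈ Set.Icc (0 : Fin n → ℝ) 1) (hxy : x ≤ y) :
    ∑ i, gradF y i * (y i - x i) ≤ F y - F x := by
  have main : ∀ m : ℕ, 1 ≤ m → ∀ s : Finset (Fin n),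
      (∑ i ∈ s, gradF y i * (y i - x i)) - L/2 * (∑ i ∈ s, (y i - x i)^2) / m
        ≤ F (mixFun x y s) - F x := by
    intro m hm s
    induction s using Finset.induction_on with
    | empty =>
      have : mixFun x y ∅ = x := by funext j; simp [mixFun]
      rw [this]
      simp
    | insert i s hi ih =>
      have hzmem := mixFun_mem hx hy s
      have hzy : mixFun x y s ≤ y := by
        intro j
        unfold mixFun
        split_ifs
        · exact le_rfl
        · exact hxy j
      have hzi : mixFun x y s i = x i := by unfold mixFun; rw [if_neg hi]
      have hd0 : 0 ≤ y i - x i := sub_nonneg.2 (hxy i)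
      have hdi : mixFun x y s i + (y i - x i) = y i := by rw [hzi]; ring
      have hstep := inner_down hDR hsm hzmem hy hzy hd0 hdi hm
      rw [mixFun_insert hi]
      rw [Finset.sum_insert hi, Finset.sum_insert hi]
      have hring : (gradF y i * (y i - x i) - L / 2 * (y i - x i) ^ 2 / m)
          + ((∑ j ∈ s, gradF y j * (y j - x j)) - L/2 * (∑ j ∈ s, (y j - x j)^2) / m)
          = gradF y i * (y i - x i) + (∑ j ∈ s, gradF y j * (y j - x j))
            - L/2 * ((y i - x i)^2 + ∑ j ∈ s, (y j - x j)^2) / m := by ring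
      linarith [hring]
  apply le_of_forall_pos_le_add
  intro ε hε
  set K := L/2 * (∑ i, (y i - x i)^2) with hK
  obtain ⟨m, hmK⟩ := exists_nat_gt (K / ε)
  have hM1 : 1 ≤ m + 1 := Nat.le_add_left 1 m
  have hMpos : (0:ℝ) < ((m:ℝ) + 1) := by positivity
  have hmain := main (m+1) hM1 Finset.univ
  have huniv : mixFun x y Finset.univ = y := by funext j; simp [mixFun]
  rw [huniv] at hmain
  have hKM : K / ((m:ℝ)+1) < ε := by
    rw [div_lt_iff₀ hMpos]
    have : K / ε < (m:ℝ) + 1 := lt_of_lt_of_le hmK (by linarith)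
    rw [div_lt_iff₀ hε] at this
    linarith [this]
  have hcast : ((m+1 : ℕ):ℝ) = (m:ℝ) + 1 := by push_cast; ring
  rw [hcast] at hmain
  calc ∑ i, gradF y i * (y i - x i) ≤ (F y - F x) + K / ((m:ℝ)+1) := by
        rw [hK]; linarith [hmain]
    _ ≤ (F y - F x) + ε := by linarith

/-- Cross-gradient inequality: `F(p∨q) + F(p∧q) - 2F(p) ≤ ⟨∇F(p), q - p⟩`. -/
lemma grad_cross (hDR : DRSubmodular F)
    (hsm : ∀ z ∈ Set.Icc (0 : Fin n → ℝ) 1, ∀ w ∈ Set.Icc (0 : Fin n → ℝ) 1,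
      |F w - F z - ∑ i, gradF z i * (w i - z i)| ≤ L / 2 * ∑ i, (w i - z i) ^ 2)
    {p q : Fin n → ℝ} (hp : p ∈ Set.Icc (0 : Fin n → ℝ) 1)
    (hq : q ∈ Set.Icc (0 : Fin n → ℝ) 1) :
    F (fun i => max (p i) (q i)) + F (fun i => min (p i) (q i)) - 2 * F p
      ≤ ∑ i, gradF p i * (q i - p i) := by
  set u : Fin n → ℝ := fun i => max (p i) (q i) with hu
  set l : Fin n → ℝ := fun i => min (p i) (q i) with hl
  have hpbox := mem_box_iff.1 hp
  have hqbox := mem_box_iff.1 hq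
  have humem : u ∈ Set.Icc (0 : Fin n → ℝ) 1 := by
    rw [mem_box_iff]; intro j
    constructor
    · exact le_max_of_le_left (hpbox j).1
    · exact max_le (hpbox j).2 (hqbox j).2
  have hlmem : l ∈ Set.Icc (0 : Fin n → ℝ) 1 := by
    rw [mem_box_iff]; intro j
    constructor
    · exact le_min (hpbox j).1 (hqbox j).1
    · exact min_le_of_left_le (hpbox j).2
  have hpu : p ≤ u := fun j => le_max_left _ _
  have hlp : l ≤ p := fun j => min_le_left _ _
  have h1 : F u - F p ≤ ∑ i, gradF p i * (u i - p i) := dr_grad_up hDR hsm hp humem hpu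
  have h2 : ∑ i, gradF p i * (p i - l i) ≤ F p - F l := dr_grad_down hDR hsm hlmem hp hlp
  have hsum : (∑ i, gradF p i * (u i - p i)) - (∑ i, gradF p i * (p i - l i))
      = ∑ i, gradF p i * (q i - p i) := by
    rw [← Finset.sum_sub_distrib]
    apply Finset.sum_congr rfl
    intro i _
    have hmm := max_add_min (p i) (q i)
    have hru : u i = max (p i) (q i) := rfl
    have hrl : l i = min (p i) (q i) := rfl
    rw [hru, hrl]
    linear_combination (gradF p i) * hmm
  linarith

/-- Union lower bound: `(1 - ‖z‖∞) F(q) ≤ F(z ∨ q)` for nonnegative DR-submodular `F`. -/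
lemma union_bound (hDR : DRSubmodular F)
    (hnonneg : ∀ z ∈ Set.Icc (0 : Fin n → ℝ) 1, 0 ≤ F z)
    (hsm : ∀ z ∈ Set.Icc (0 : Fin n → ℝ) 1, ∀ w ∈ Set.Icc (0 : Fin n → ℝ) 1,
      |F w - F z - ∑ i, gradF z i * (w i - z i)| ≤ L / 2 * ∑ i, (w i - z i) ^ 2)
    {z q : Fin n → ℝ} (hz : z ∈ Set.Icc (0 : Fin n → ℝ) 1)
    (hq : q ∈ Set.Icc (0 : Fin n → ℝ) 1) :
    (1 - ‖z‖) * F q ≤ F (fun i => max (z i) (q i)) := by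
  have hzbox := mem_box_iff.1 hz
  have hqbox := mem_box_iff.1 hq
  have hθ0 : 0 ≤ ‖z‖ := norm_nonneg z
  have hcoord : ∀ i, z i ≤ ‖z‖ := by
    intro i
    calc z i ≤ |z i| := le_abs_self _
      _ = ‖z i‖ := rfl
      _ ≤ ‖z‖ := norm_le_pi_norm z i
  have hθ1 : ‖z‖ ≤ 1 := by
    apply pi_norm_le_iff_of_nonneg (by norm_num) |>.2
    intro i
    rw [Real.norm_eq_abs, abs_le]
    exact ⟨by linarith [(hzbox i).1], (hzbox i).2⟩
  rcases eq_or_lt_of_le hθ0 with hθz|hθpos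
  · -- ‖z‖ = 0, so z = 0 and max z q = q
    have hz0 : z = 0 := norm_eq_zero.1 hθz.symm
    have : (fun i => max (z i) (q i)) = q := by
      funext i
      rw [hz0]
      simp [max_eq_right (hqbox i).1]
    rw [this, ← hθz]
    simp
  · set θ := ‖z‖ with hθ
    set u : Fin n → ℝ := fun i => max (z i) (q i) with hu
    set τ : Fin n → ℝ := fun i => q i + (u i - q i)/θ with hτ
    have hqu : q ≤ u := fun i => le_max_right _ _
    have hd : ∀ i, u i - q i ≤ θ * (1 - q i) := by
      intro i
      have hru : u i = max (z i) (q i) := rfl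
      rcases le_or_gt (z i) (q i) with h|h
      · rw [hru, max_eq_right h]
        have := (hqbox i).2
        nlinarith
      · rw [hru, max_eq_left h.le]
        have h1 := hcoord i
        have h2 := (hqbox i).1
        nlinarith
    have humem : u ∈ Set.Icc (0 : Fin n → ℝ) 1 := by
      rw [mem_box_iff]; intro j
      constructor
      · exact le_max_of_le_left (hzbox j).1
      · exact max_le (hzbox j).2 (hqbox j).2
    have hτmem : τ ∈ Set.Icc (0 : Fin n → ℝ) 1 := by
      rw [mem_box_iff]; intro j
      have h0 : 0 ≤ (u j - q j)/θ := div_nonneg (by linarith [hqu j]) hθpos.le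
      have h1 : (u j - q j)/θ ≤ 1 - q j := by
        rw [div_le_iff₀ hθpos]
        calc u j - q j ≤ θ * (1 - q j) := hd j
          _ = (1 - q j) * θ := by ring
      constructor
      · have := (hqbox j).1
        show 0 ≤ q j + (u j - q j)/θ
        linarith
      · show q j + (u j - q j)/θ ≤ 1
        linarith
    have huτ : u ≤ τ := by
      intro j
      show u j ≤ q j + (u j - q j)/θ
      have h1 : u j - q j ≤ (u j - q j)/θ := by
        rw [le_div_iff₀ hθpos]
        nlinarith [hqu j]
      linarith
    have h1 : ∑ i, gradF u i * (u i - q i) ≤ F u - F q := dr_grad_down hDR hsm hq humem hqu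
    have h2 : F τ - F u ≤ ∑ i, gradF u i * (τ i - u i) := dr_grad_up hDR hsm humem hτmem huτ
    have hττ : ∑ i, gradF u i * (τ i - u i) = (1/θ - 1) * ∑ i, gradF u i * (u i - q i) := by
      rw [Finset.mul_sum]
      apply Finset.sum_congr rfl
      intro i _
      have : τ i - u i = (1/θ - 1) * (u i - q i) := by
        show q i + (u i - q i)/θ - u i = _
        field_simp
        ring
      rw [this]
      ring
    set A := ∑ i, gradF u i * (u i - q i) with hA
    have hFτ : 0 ≤ F τ := hnonneg τ hτmem
    have hkey : 0 ≤ F u + (1/θ - 1) * A := by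
      rw [hττ] at h2
      linarith
    have hkey2 : 0 ≤ θ * (F u + (1/θ - 1) * A) := mul_nonneg hθpos.le hkey
    have hkey3 : θ * (F u + (1/θ - 1) * A) = θ * F u + (1 - θ) * A := by
      field_simp
    have hmul : (1 - θ) * F q ≤ (1 - θ) * (F u - A) :=
      mul_le_mul_of_nonneg_left (by linarith) (by linarith)
    have hkey4 : 0 ≤ θ * F u + (1 - θ) * A := hkey3 ▸ hkey2
    nlinarith [hmul, hkey4]

end DR

lemma fw_alg2 (h Sj H t : ℝ) (hS : Sj ≠ 0) :
    h * (Sj + h) * (H / Sj * t) = h * H * t + h^2 * (H / Sj * t) := by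
  field_simp

lemma fw_alg (Sj h G c L nn : ℝ) (hne : Sj + h ≠ 0) :
    (Sj+h)^2 * (G + (h/(Sj+h))*(c - 2*G) - L/2*((h/(Sj+h))^2*nn))
    = (Sj^2 - h^2)*G + h*(Sj+h)*c - L*nn/2*h^2 := by
  field_simp
  ring

set_option maxHeartbeats 2000000 in
/-- With initialization `x₀ ∈ argmin_{x ∈ P} ‖x‖_∞` (dropping `0 ∈ P` and
`F(0) = 0`), there is an absolute constant `C > 0` such that for all `T ≥ 2`,
`max_{0 ≤ j ≤ T} F(x(t_j)) - (1/4) F(x₀) ≥ (1/4)(1 - min_{x ∈ P} ‖x‖_∞) F(x*)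
  - C n L / (ln T)²`.  (On `Fin n → ℝ` the default norm `‖·‖` is the sup norm.) -/
theorem fw_general_start_log_bound :
    ∃ C : ℝ, 0 < C ∧
      ∀ (n : ℕ) (F : (Fin n → ℝ) → ℝ) (gradF : (Fin n → ℝ) → Fin n → ℝ) (L : ℝ),
        0 ≤ L →
        (∀ z ∈ Set.Icc (0 : Fin n → ℝ) 1, 0 ≤ F z) →
        DRSubmodular F →
        HasGradientOnBox F gradF →
        (∀ z ∈ Set.Icc (0 : Fin n → ℝ) 1, ∀ w ∈ Set.Icc (0 : Fin n → ℝ) 1,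
          |F w - F z - ∑ i, gradF z i * (w i - z i)| ≤ L / 2 * ∑ i, (w i - z i) ^ 2) →
        ∀ P : Set (Fin n → ℝ), P ⊆ Set.Icc 0 1 → Convex ℝ P →
        ∀ xstar ∈ P, (∀ z ∈ P, F z ≤ F xstar) →
        ∀ x0 ∈ P, (∀ z ∈ P, ‖x0‖ ≤ ‖z‖) →
        ∀ T : ℕ, 2 ≤ T →
        ∀ x v : ℕ → Fin n → ℝ,
          x 0 = x0 →
          (∀ j < T, v j ∈ P) →
          (∀ j < T, ∀ w ∈ P, ∑ i, gradF (x j) i * w i ≤ ∑ i, gradF (x j) i * v j i) →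
          (∀ j < T, x (j + 1) = fwRatio T j • x j + (1 - fwRatio T j) • v j) →
          ∃ j ≤ T, F (x j) - 1 / 4 * F x0 ≥
            1 / 4 * (1 - ‖x0‖) * F xstar - C * (n : ℝ) * L / Real.log T ^ 2 := by
  refine ⟨1, one_pos, ?_⟩
  intro n F gradF L hL hnn hDR _hGrad hsm P hPbox hPconv xstar hxsP hxsmax x0 hx0P _hx0min
    T hT x v hx00 hvP hlmo hrec
  have hT1 : 1 ≤ T := le_trans (by norm_num) hT
  have hHT : 0 < harmonicNum T := harmonicNum_pos hT1
  set S : ℕ → ℝ := fun j => harmonicNum T + harmonicNum j with hS_def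
  have hSpos : ∀ j, 0 < S j := by
    intro j; have := harmonicNum_nonneg j
    simp only [hS_def]; linarith
  have hSsucc : ∀ j, S (j+1) = S j + 1/((j:ℝ)+1) := by
    intro j
    simp only [hS_def, harmonicNum_succ]
    push_cast
    ring
  have hSle : ∀ j ≤ T, S j ≤ 2 * harmonicNum T := by
    intro j hj
    have := harmonicNum_mono hj
    simp only [hS_def]; linarith
  have hratio : ∀ j < T, fwRatio T j = S j / S (j+1) := by
    intro j hj
    exact fwRatio_eq hHT (harmonicNum_mono hj.le) (harmonicNum_mono hj)
  have hρ0 : ∀ j < T, 0 ≤ fwRatio T j := by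
    intro j hj
    rw [hratio j hj]
    exact le_of_lt (div_pos (hSpos j) (hSpos (j+1)))
  have hρ1 : ∀ j < T, fwRatio T j ≤ 1 := by
    intro j hj
    rw [hratio j hj, div_le_one (hSpos (j+1)), hSsucc j]
    have : (0:ℝ) < 1/((j:ℝ)+1) := by positivity
    linarith
  -- iterates stay in P
  have hxP : ∀ j ≤ T, x j ∈ P := by
    intro j hj
    induction j with
    | zero => rw [hx00]; exact hx0P
    | succ j ih =>
      have hjT : j < T := hj
      rw [hrec j hjT]
      exact hPconv (ih hjT.le) (hvP j hjT) (hρ0 j hjT) (by linarith [hρ1 j hjT]) (by ring)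
  have hxbox : ∀ j ≤ T, x j ∈ Set.Icc (0 : Fin n → ℝ) 1 := fun j hj => hPbox (hxP j hj)
  have hvbox : ∀ j < T, v j ∈ Set.Icc (0 : Fin n → ℝ) 1 := fun j hj => hPbox (hvP j hj)
  have hx0box : x0 ∈ Set.Icc (0 : Fin n → ℝ) 1 := hPbox hx0P
  have hxsbox : xstar ∈ Set.Icc (0 : Fin n → ℝ) 1 := hPbox hxsP
  -- norm facts
  have hbox_norm : ∀ z : Fin n → ℝ, z ∈ Set.Icc (0 : Fin n → ℝ) 1 → ‖z‖ ≤ 1 := by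
    intro z hz
    have hzb := mem_box_iff.1 hz
    apply pi_norm_le_iff_of_nonneg (by norm_num) |>.2
    intro i
    rw [Real.norm_eq_abs, abs_le]
    exact ⟨by linarith [(hzb i).1], (hzb i).2⟩
  have hθ'0 : 0 ≤ 1 - ‖x0‖ := by linarith [hbox_norm x0 hx0box]
  set θ' := 1 - ‖x0‖ with hθ'_def
  have hFs0 : 0 ≤ F xstar := hnn xstar hxsbox
  have hθF : 0 ≤ θ' * F xstar := mul_nonneg hθ'0 hFs0
  have hG0 : ∀ j ≤ T, 0 ≤ F (x j) := fun j hj => hnn (x j) (hxbox j hj)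
  -- goal nonneg error term
  have hE0 : 0 ≤ 1 * (n : ℝ) * L / Real.log T ^ 2 := by positivity
  -- norm recursion
  have hnormx : ∀ j ≤ T, ‖x j‖ ≤ 1 - (harmonicNum T / S j) * θ' := by
    intro j hj
    induction j with
    | zero =>
      have : S 0 = harmonicNum T := by simp [hS_def, harmonicNum]
      rw [this, div_self hHT.ne', hx00]
      simp [hθ'_def]
    | succ j ih =>
      have hjT : j < T := hj
      have ihh := ih hjT.le
      rw [hrec j hjT]
      have h1 : ‖fwRatio T j • x j + (1 - fwRatio T j) • v j‖
          ≤ fwRatio T j * ‖x j‖ + (1 - fwRatio T j) * ‖v j‖ := by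
        calc ‖fwRatio T j • x j + (1 - fwRatio T j) • v j‖
            ≤ ‖fwRatio T j • x j‖ + ‖(1 - fwRatio T j) • v j‖ := norm_add_le _ _
          _ = fwRatio T j * ‖x j‖ + (1 - fwRatio T j) * ‖v j‖ := by
              rw [norm_smul, norm_smul, Real.norm_eq_abs, Real.norm_eq_abs,
                abs_of_nonneg (hρ0 j hjT), abs_of_nonneg (by linarith [hρ1 j hjT])]
      have h2 : fwRatio T j * ‖x j‖ ≤ fwRatio T j * (1 - (harmonicNum T / S j) * θ') :=
        mul_le_mul_of_nonneg_left ihh (hρ0 j hjT)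
      have h3 : (1 - fwRatio T j) * ‖v j‖ ≤ (1 - fwRatio T j) * 1 :=
        mul_le_mul_of_nonneg_left (hbox_norm _ (hvbox j hjT)) (by linarith [hρ1 j hjT])
      have h4 : fwRatio T j * (1 - (harmonicNum T / S j) * θ') + (1 - fwRatio T j) * 1
          = 1 - (harmonicNum T / S (j+1)) * θ' := by
        rw [hratio j hjT]
        have h5 := (hSpos j).ne'
        have h6 := (hSpos (j+1)).ne'
        field_simp
        ring
      linarith
  clear_value S
  clear_value θ'
  -- big case split
  by_cases hc1 : θ' * F xstar ≤ 3 * F (x 0)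
  · refine ⟨0, Nat.zero_le T, ?_⟩
    rw [← hx00]
    have h9 := hG0 0 (Nat.zero_le T)
    rw [ge_iff_le]
    linarith [hc1, hE0]
  push_neg at hc1
  by_cases hc2 : ∃ j ≤ T, θ' * F xstar / 3 ≤ F (x j)
  · obtain ⟨j, hjT, hjF⟩ := hc2
    refine ⟨j, hjT, ?_⟩
    rw [← hx00, ge_iff_le]
    have h9 : F (x 0) < θ' * F xstar / 3 := by linarith
    linarith [hE0, hjF]
  push_neg at hc2
  -- main analysis: all values below θ' F*/3
  have hsmall : ∀ j ≤ T, F (x j) ≤ θ' * F xstar / 3 := fun j hj => (hc2 j hj).le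
  -- per-step inequality
  have hstep : ∀ j < T, S (j+1)^2 * F (x (j+1)) ≥
      S j^2 * F (x j) + (1/((j:ℝ)+1)) * harmonicNum T * (θ' * F xstar)
        - L * n / 2 * (1/(((j:ℝ)+1)^2)) := by
    intro j hjT
    have hj1T : j + 1 ≤ T := hjT
    have hxj := hxbox j hjT.le
    have hxj1 := hxbox (j+1) hj1T
    have hvb := hvbox j hjT
    set hvr : ℝ := 1/((j:ℝ)+1) with hvr_def
    have hvr0 : 0 < hvr := by rw [hvr_def]; positivity
    have hγ0 : 0 ≤ 1 - fwRatio T j := by linarith [hρ1 j hjT]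
    have hS1pos := hSpos (j+1)
    have hSjpos := hSpos j
    have hγeq : 1 - fwRatio T j = hvr / S (j+1) := by
      rw [hratio j hjT, hSsucc j, ← hvr_def]
      rw [eq_div_iff (ne_of_gt (by linarith)), sub_mul, div_mul_cancel₀ _ (ne_of_gt (by linarith))]; ring
    -- componentwise difference
    have hΔ : ∀ i, x (j+1) i - x j i = (1 - fwRatio T j) * (v j i - x j i) := by
      intro i
      rw [hrec j hjT]
      simp only [Pi.add_apply, Pi.smul_apply, smul_eq_mul]
      ring
    -- smoothness
    have hs := (abs_le.1 (hsm (x j) hxj (x (j+1)) hxj1)).1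
    have hsum1 : ∑ i, gradF (x j) i * (x (j+1) i - x j i)
        = (1 - fwRatio T j) * ∑ i, gradF (x j) i * (v j i - x j i) := by
      rw [Finset.mul_sum]
      apply Finset.sum_congr rfl
      intro i _
      rw [hΔ i]; ring
    have hsumsq : ∑ i, (x (j+1) i - x j i)^2
        = (1 - fwRatio T j)^2 * ∑ i, (v j i - x j i)^2 := by
      rw [Finset.mul_sum]
      apply Finset.sum_congr rfl
      intro i _
      rw [hΔ i]; ring
    have hsqn : ∑ i, (v j i - x j i)^2 ≤ (n:ℝ) := by
      calc ∑ i, (v j i - x j i)^2 ≤ ∑ _i : Fin n, (1:ℝ) := by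
            apply Finset.sum_le_sum
            intro i _
            have h1 := (mem_box_iff.1 hvb i)
            have h2 := (mem_box_iff.1 hxj i)
            nlinarith [h1.1, h1.2, h2.1, h2.2]
        _ = (n:ℝ) := by simp
    -- LMO step
    have e1 : ∀ w : Fin n → ℝ, ∑ i, gradF (x j) i * (w i - x j i)
        = (∑ i, gradF (x j) i * w i) - ∑ i, gradF (x j) i * x j i := by
      intro w
      rw [← Finset.sum_sub_distrib]
      apply Finset.sum_congr rfl
      intro i _
      ring
    have hlin : ∑ i, gradF (x j) i * (xstar i - x j i)
        ≤ ∑ i, gradF (x j) i * (v j i - x j i) := by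
      have := hlmo j hjT xstar hxsP
      rw [e1 xstar, e1 (v j)]
      linarith
    -- cross-gradient and union bound
    have hcross := grad_cross hDR hsm hxj hxsbox
    have hlbox : (fun i => min (x j i) (xstar i)) ∈ Set.Icc (0 : Fin n → ℝ) 1 := by
      rw [mem_box_iff]
      intro i
      have h1 := mem_box_iff.1 hxj i
      have h2 := mem_box_iff.1 hxsbox i
      exact ⟨le_min h1.1 h2.1, min_le_of_left_le h1.2⟩
    have hl0 : 0 ≤ F (fun i => min (x j i) (xstar i)) := hnn _ hlbox
    have hub := union_bound hDR hnn hsm hxj hxsbox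
    have hnj := hnormx j hjT.le
    have hc2 : harmonicNum T / S j * θ' * F xstar ≤ (1 - ‖x j‖) * F xstar :=
      mul_le_mul_of_nonneg_right (by linarith) hFs0
    -- combine: directional derivative lower bound
    have hD : harmonicNum T / S j * (θ' * F xstar) - 2 * F (x j)
        ≤ ∑ i, gradF (x j) i * (v j i - x j i) := by
      have : harmonicNum T / S j * (θ' * F xstar) = harmonicNum T / S j * θ' * F xstar := by ring
      rw [this]
      linarith
    -- one-step progress
    have hprog : F (x j) + (1 - fwRatio T j) * (harmonicNum T / S j * (θ' * F xstar) - 2 * F (x j))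
        - L/2 * ((1 - fwRatio T j)^2 * (n:ℝ)) ≤ F (x (j+1)) := by
      have hb1 : (1 - fwRatio T j) * (harmonicNum T / S j * (θ' * F xstar) - 2 * F (x j))
          ≤ (1 - fwRatio T j) * ∑ i, gradF (x j) i * (v j i - x j i) :=
        mul_le_mul_of_nonneg_left hD hγ0
      have hb2 : L/2 * ((1 - fwRatio T j)^2 * ∑ i, (v j i - x j i)^2)
          ≤ L/2 * ((1 - fwRatio T j)^2 * (n:ℝ)) := by
        apply mul_le_mul_of_nonneg_left _ (by linarith : (0:ℝ) ≤ L/2)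
        exact mul_le_mul_of_nonneg_left hsqn (sq_nonneg _)
      rw [hsum1, hsumsq] at hs
      linarith
    -- multiply by S(j+1)²
    have hmulS : S (j+1)^2 * (F (x j)
        + (1 - fwRatio T j) * (harmonicNum T / S j * (θ' * F xstar) - 2 * F (x j))
        - L/2 * ((1 - fwRatio T j)^2 * (n:ℝ)))
        ≤ S (j+1)^2 * F (x (j+1)) :=
      mul_le_mul_of_nonneg_left hprog (sq_nonneg _)
    -- algebraic identity
    have hiden : S (j+1)^2 * (F (x j)
        + (1 - fwRatio T j) * (harmonicNum T / S j * (θ' * F xstar) - 2 * F (x j))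
        - L/2 * ((1 - fwRatio T j)^2 * (n:ℝ)))
        = (S j^2 - hvr^2) * F (x j)
          + hvr * S (j+1) * (harmonicNum T / S j * (θ' * F xstar))
          - L * n / 2 * hvr^2 := by
      have hS1 : S (j+1) = S j + hvr := by rw [hSsucc j, hvr_def]
      have hne : S j + hvr ≠ 0 := by rw [← hS1]; exact hS1pos.ne'
      rw [hγeq, hS1]
      exact fw_alg (S j) hvr (F (x j)) _ L (n:ℝ) hne
    -- lower bound the middle term
    have hS1 : S (j+1) = S j + hvr := by rw [hSsucc j, hvr_def]
    have e1' : hvr * (S j + hvr) * (harmonicNum T / S j * (θ' * F xstar))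
        = hvr * harmonicNum T * (θ' * F xstar)
          + hvr^2 * (harmonicNum T / S j * (θ' * F xstar)) :=
      fw_alg2 hvr (S j) (harmonicNum T) (θ' * F xstar) hSjpos.ne'
    have hhalf : (1:ℝ)/2 ≤ harmonicNum T / S j := by
      rw [le_div_iff₀ hSjpos]
      have := hSle j hjT.le
      linarith
    have hinner : F (x j) ≤ harmonicNum T / S j * (θ' * F xstar) := by
      have h1 := hsmall j hjT.le
      have h2 : 0 ≤ (harmonicNum T / S j - 1/2) * (θ' * F xstar) :=
        mul_nonneg (by linarith) hθF
      have h3 : (harmonicNum T / S j - 1/2) * (θ' * F xstar)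
          = harmonicNum T / S j * (θ' * F xstar) - 1/2 * (θ' * F xstar) := by ring
      linarith [h2, h3.symm ▸ h2]
    have e2 : hvr^2 * F (x j) ≤ hvr^2 * (harmonicNum T / S j * (θ' * F xstar)) :=
      mul_le_mul_of_nonneg_left hinner (sq_nonneg hvr)
    have hvsq : hvr^2 = 1/(((j:ℝ)+1)^2) := by
      rw [hvr_def, div_pow, one_pow]
    rw [ge_iff_le, ← hvsq]
    calc S j ^ 2 * F (x j) + hvr * harmonicNum T * (θ' * F xstar) - L * ↑n / 2 * hvr ^ 2
        ≤ (S j^2 - hvr^2) * F (x j)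
          + hvr * S (j+1) * (harmonicNum T / S j * (θ' * F xstar))
          - L * ↑n / 2 * hvr^2 := by
          rw [hS1]
          linarith [e1', e2]
      _ = S (j+1)^2 * (F (x j)
          + (1 - fwRatio T j) * (harmonicNum T / S j * (θ' * F xstar) - 2 * F (x j))
          - L/2 * ((1 - fwRatio T j)^2 * (n:ℝ))) := hiden.symm
      _ ≤ S (j+1)^2 * F (x (j+1)) := hmulS
  -- Lyapunov induction
  have hInd : ∀ j ≤ T, S j^2 * F (x j) ≥ harmonicNum T^2 * F (x 0)
      + harmonicNum T * (θ' * F xstar) * harmonicNum j - L * n / 2 * harmonicNum2 j := by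
    intro j hj
    induction j with
    | zero =>
      have h1 : S 0 = harmonicNum T := by simp [hS_def, harmonicNum]
      have h2 : harmonicNum 0 = 0 := by simp [harmonicNum]
      have h3 : harmonicNum2 0 = 0 := by simp [harmonicNum2]
      rw [h1, h2, h3]
      ring_nf
      exact le_refl _
    | succ j ih =>
      have hjT : j < T := hj
      have ihh := ih hjT.le
      have hst := hstep j hjT
      rw [harmonicNum_succ, harmonicNum2_succ]
      rw [ge_iff_le]
      push_cast
      rw [ge_iff_le] at ihh hst
      linarith [ihh, hst]
  -- conclusion at j = T
  refine ⟨T, le_refl T, ?_⟩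
  have hfin := hInd T (le_refl T)
  have hST : S T = 2 * harmonicNum T := by simp only [hS_def]; ring
  rw [hST] at hfin
  have hh2 : harmonicNum2 T ≤ 2 := harmonicNum2_le_two T
  have hLn : 0 ≤ L * (n:ℝ) := mul_nonneg hL (Nat.cast_nonneg n)
  have hmain : 4 * harmonicNum T^2 * F (x T) ≥
      harmonicNum T^2 * F (x 0) + harmonicNum T^2 * (θ' * F xstar) - L * n := by
    have h1 : L * ↑n / 2 * harmonicNum2 T ≤ L * ↑n := by
      nlinarith [mul_nonneg hLn (sub_nonneg.2 hh2)]
    nlinarith [hfin]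
  -- error term comparison and conclusion
  have hHT2 : (0:ℝ) < 4 * harmonicNum T^2 := by positivity
  have hlogpos : 0 < Real.log T := by
    apply Real.log_pos
    exact_mod_cast lt_of_lt_of_le (by norm_num) hT
  have hlogle : Real.log T ≤ harmonicNum T := by
    calc Real.log T ≤ Real.log ((T:ℝ)+1) := by
          apply Real.log_le_log (by positivity)
          linarith
      _ ≤ harmonicNum T := log_le_harmonicNum T
  have hD : Real.log T ^ 2 * (1 * (n:ℝ) * L / Real.log T ^ 2) = 1 * (n:ℝ) * L := by
    field_simp
  have hsq4 : Real.log T ^ 2 ≤ 4 * harmonicNum T ^ 2 := by nlinarith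
  have hmul2 : Real.log T ^ 2 * (1 * (n:ℝ) * L / Real.log T ^ 2)
      ≤ 4 * harmonicNum T ^ 2 * (1 * (n:ℝ) * L / Real.log T ^ 2) :=
    mul_le_mul_of_nonneg_right hsq4 hE0
  have hfinal : 0 ≤ F (x T) - 1/4 * F (x 0) - 1/4 * (θ' * F xstar)
      + 1 * (n:ℝ) * L / Real.log T ^ 2 := by
    have h0 : 0 ≤ 4 * harmonicNum T^2 * (F (x T) - 1/4 * F (x 0) - 1/4 * (θ' * F xstar)
        + 1 * (n:ℝ) * L / Real.log T ^ 2) := by linarith [hmain, hmul2, hD]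
    have h1 : 4 * harmonicNum T^2 * 0 ≤ 4 * harmonicNum T^2 * (F (x T) - 1/4 * F (x 0)
        - 1/4 * (θ' * F xstar) + 1 * (n:ℝ) * L / Real.log T ^ 2) := by linarith
    have := le_of_mul_le_mul_left h1 hHT2
    linarith
  rw [← hx00, ge_iff_le, ← sub_nonneg]
  linarith [hfinal]
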